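/- Let n ≥ 3 be odd, let A = circulant(a₀, a₁, …, a_{n−1}) be an n×n circulant matrix over a field F of characteristic 2, and let D₁ = diagonal(d₀, …, d_{n−1}) and D₂ = diagonal(e₀, …, e_{n−1}) be non-singular diagonal matrices over F such that A·D₁·A·D₂ = I. If a₁ ≠ 0, then trace(D₁) = d₀ + d₁ + ⋯ + d_{n−1} = 0. -/

import Mathlib

open Matrix

/-- The `n × n` circulant matrix with first row `c₀, c₁, …, c_{n-1}`, i.e. the matrix whose
`(i,j)` entry is `c_{(j - i) mod n}`. -/
def circulantM {n : ℕ} {F : Type*} (c : Fin n → F) : Matrix (Fin n) (Fin n) F :=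
  Matrix.of fun i j => c (j - i)

/-- Let `n ≥ 3` be odd, let `A = circulant(a₀, …, a_{n-1})` be an `n × n`
circulant matrix over a field `F` of characteristic 2, and let `D₁ = diagonal d`,
`D₂ = diagonal e` be non-singular diagonal matrices over `F` such that
`A * D₁ * A * D₂ = I`. If `a₁ ≠ 0`, then `trace D₁ = d₀ + d₁ + ⋯ + d_{n-1} = 0`. -/
theorem trace_eq_zero_of_semiInvolutory_odd_order {F : Type*} [Field F] [CharP F 2]
    {n : ℕ} (hn : 3 ≤ n) (hodd : Odd n)
    (a d e : Fin n → F) (hd : ∀ i, d i ≠ 0) (he : ∀ i, e i ≠ 0)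
    (h : circulantM a * Matrix.diagonal d * circulantM a * Matrix.diagonal e = 1)
    (ha : a ⟨1, by omega⟩ ≠ 0) :
    (Matrix.diagonal d).trace = 0 := by
  haveI : NeZero n := ⟨by omega⟩
  set A := circulantM a with hA
  have h1v : ((1 : Fin n) : ℕ) = 1 := by
    rw [Fin.coe_ofNat_eq_mod]; exact Nat.mod_eq_of_lt (by omega)
  have h2v : ((2 : Fin n) : ℕ) = 2 := by
    rw [Fin.coe_ofNat_eq_mod]; exact Nat.mod_eq_of_lt (by omega)
  have ha1 : a 1 ≠ 0 := by
    have : (1 : Fin n) = ⟨1, by omega⟩ := Fin.ext h1v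
    rwa [this]
  -- key arithmetic fact: `t + t = 2` in `Fin n` forces `t = 1` (since `n` is odd)
  have key : ∀ t : Fin n, t + t = 2 → t = 1 := by
    intro t ht
    have hv : ((t + t : Fin n) : ℕ) = 2 := by rw [ht, h2v]
    rw [Fin.add_def] at hv
    have hv2 : ((t : ℕ) + (t : ℕ)) % n = 2 := hv
    have htn : (t : ℕ) < n := t.isLt
    obtain ⟨k, hk⟩ := hodd
    have : (t : ℕ) = 1 := by
      rcases Nat.lt_or_ge ((t : ℕ) + (t : ℕ)) n with hlt | hge
      · rw [Nat.mod_eq_of_lt hlt] at hv2; omega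
      · have h2n : (t : ℕ) + (t : ℕ) - n < n := by omega
        rw [Nat.mod_eq_sub_mod hge, Nat.mod_eq_of_lt h2n] at hv2
        omega
    exact Fin.ext (by rw [this, h1v])
  -- the off-diagonal entries of `A * D₁ * A` vanish
  have hoff : ∀ i j : Fin n, i ≠ j → (A * Matrix.diagonal d * A) i j = 0 := by
    intro i j hij
    have h0 := congrFun (congrFun h i) j
    rw [Matrix.mul_diagonal, Matrix.one_apply_ne hij] at h0
    exact (mul_eq_zero.mp h0).resolve_right (he j)
  -- entries of `A * D₁ * A`
  have hentry : ∀ i j : Fin n,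
      (A * Matrix.diagonal d * A) i j = ∑ k, a (k - i) * d k * a (j - k) := by
    intro i j
    rw [Matrix.mul_apply]
    refine Finset.sum_congr rfl fun k _ => ?_
    rw [Matrix.mul_diagonal]
    rfl
  have h2ne : (2 : Fin n) ≠ 0 := by
    intro hc
    have := congrArg (Fin.val) hc
    rw [h2v] at this
    simp at this
  -- the inner sums
  have hinner : ∀ k : Fin n, (∑ i : Fin n, a (k - i) * a (i + 2 - k)) = a 1 * a 1 := by
    intro k
    have hre : (∑ i : Fin n, a (k - i) * a (i + 2 - k)) = ∑ t : Fin n, a t * a (2 - t) := by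
      refine Fintype.sum_equiv (Equiv.subLeft k) _ _ ?_
      intro i
      simp only [Equiv.subLeft_apply]
      have h3 : (2 : Fin n) - (k - i) = i + 2 - k := by abel
      rw [h3]
    rw [hre]
    have hsplit : (∑ t : Fin n, a t * a (2 - t))
        = a 1 * a (2 - 1) + ∑ t ∈ Finset.univ.erase 1, a t * a (2 - t) := by
      rw [← Finset.sum_erase_add _ _ (Finset.mem_univ (1 : Fin n))]
      ring
    have h21 : (2 : Fin n) - 1 = 1 := by
      rw [sub_eq_iff_eq_add]; apply Fin.ext; rw [h2v, Fin.val_add, h1v]; exact (Nat.mod_eq_of_lt (by omega)).symm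
    have hz : (∑ t ∈ Finset.univ.erase 1, a t * a (2 - t)) = 0 := by
      refine Finset.sum_involution (fun t _ => 2 - t) ?_ ?_ ?_ ?_
      · intro t _
        rw [sub_sub_cancel, mul_comm]
        exact CharTwo.add_self_eq_zero _
      · intro t ht _
        intro hc
        have hc' : (2 : Fin n) - t = t := hc
        have : t + t = 2 := (sub_eq_iff_eq_add.mp hc').symm
        exact (Finset.mem_erase.mp ht).1 (key t this)
      · intro t ht
        refine Finset.mem_erase.mpr ⟨?_, Finset.mem_univ _⟩
        intro hc
        have hc' : (2 : Fin n) - t = 1 := hc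
        have h' : t = 2 - 1 := eq_sub_of_add_eq' (sub_eq_iff_eq_add.mp hc').symm
        rw [h21] at h'
        exact (Finset.mem_erase.mp ht).1 h'
      · intro t ht
        show (2 : Fin n) - (2 - t) = t
        exact sub_sub_cancel _ _
    rw [hsplit, h21, hz, add_zero]
  -- sum of the `(i, i+2)` entries
  have hmain : (∑ k : Fin n, d k) * (a 1 * a 1) = 0 := by
    calc (∑ k : Fin n, d k) * (a 1 * a 1)
        = ∑ k : Fin n, d k * (a 1 * a 1) := by rw [Finset.sum_mul]
      _ = ∑ k : Fin n, d k * ∑ i : Fin n, a (k - i) * a (i + 2 - k) := by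
          refine Finset.sum_congr rfl fun k _ => by rw [hinner k]
      _ = ∑ k : Fin n, ∑ i : Fin n, a (k - i) * d k * a (i + 2 - k) := by
          refine Finset.sum_congr rfl fun k _ => ?_
          rw [Finset.mul_sum]
          refine Finset.sum_congr rfl fun i _ => by ring
      _ = ∑ i : Fin n, ∑ k : Fin n, a (k - i) * d k * a (i + 2 - k) := Finset.sum_comm
      _ = ∑ i : Fin n, (A * Matrix.diagonal d * A) i (i + 2) := by
          refine Finset.sum_congr rfl fun i _ => ?_
          rw [hentry]
      _ = 0 := by
          refine Finset.sum_eq_zero fun i _ => hoff i (i + 2) ?_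
          intro hc
          exact h2ne (by
            have := (left_eq_add).mp hc
            exact this)
  have : (∑ k : Fin n, d k) = 0 := by
    rcases mul_eq_zero.mp hmain with h' | h'
    · exact h'
    · exact absurd h' (mul_ne_zero ha1 ha1)
  rw [Matrix.trace_diagonal]
  exact this
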